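/- Let n ≥ 1, let ζ = exp(2πi/n) ∈ ℂ, and let t, s ∈ ℂ with |t| = |s| = 1. Then the polynomials f_t and f_s differ by a real constant: f_t − f_s = C ((f_t).coeff 0 − (f_s).coeff 0). Equivalently, for all x ∈ ℝ, (f_t).eval x − (f_s).eval x is independent of x. -/

import Mathlib

open Polynomial Finset

lemma prod_lin (n : ℕ) (hn : 1 ≤ n) (ζ : ℂ)
    (hζ : ζ = Complex.exp (2 * Real.pi * Complex.I / n)) (t z : ℂ) :
    ∏ k ∈ Finset.range n, (z - t * ζ ^ k) = z ^ n - t ^ n := by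
  have hprim : IsPrimitiveRoot ζ n := by
    rw [hζ]; exact Complex.isPrimitiveRoot_exp n (by omega)
  have h := X_pow_sub_C_eq_prod hprim (n := n) (α := t) (a := t ^ n) (by omega) rfl
  have h2 := congrArg (Polynomial.eval z) h
  simp only [eval_sub, eval_pow, eval_X, eval_C, eval_prod] at h2
  rw [Finset.prod_congr rfl (fun k _ => show z - t * ζ ^ k = z - ζ ^ k * t by ring)]
  exact h2.symm

lemma zeta_prod (n : ℕ) (hn : 1 ≤ n) (ζ : ℂ)
    (hζ : ζ = Complex.exp (2 * Real.pi * Complex.I / n)) :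
    ∏ k ∈ Finset.range n, ζ ^ k = (-1 : ℂ) ^ (n - 1) := by
  obtain ⟨m, rfl⟩ : ∃ m, n = m + 1 := ⟨n - 1, by omega⟩
  have hm1 : (m : ℂ) + 1 ≠ 0 := by exact_mod_cast Nat.cast_ne_zero (R := ℂ).mpr (show m + 1 ≠ 0 by omega)
  rw [Finset.prod_pow_eq_pow_sum]
  have h2 : (∑ x ∈ Finset.range (m + 1), (x : ℂ)) * 2 = ((m : ℂ) + 1) * m := by
    have h := Finset.sum_range_id_mul_two (m + 1)
    rw [Nat.add_sub_cancel] at h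
    have h' : ((∑ i ∈ Finset.range (m + 1), i : ℕ) : ℂ) * 2 = (((m + 1) * m : ℕ) : ℂ) := by
      exact_mod_cast congrArg (Nat.cast : ℕ → ℂ) h
    push_cast at h'
    exact h'
  rw [hζ, ← Complex.exp_nat_mul]
  push_cast
  rw [show (∑ x ∈ Finset.range (m + 1), (x : ℂ)) * (2 * Real.pi * Complex.I / ((m : ℂ) + 1))
      = ((∑ x ∈ Finset.range (m + 1), (x : ℂ)) * 2) * (Real.pi * Complex.I) / ((m : ℂ) + 1) by
        ring, h2]
  rw [show ((m : ℂ) + 1) * m * (Real.pi * Complex.I) / ((m : ℂ) + 1)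
      = (m : ℂ) * (Real.pi * Complex.I) by field_simp]
  rw [Complex.exp_nat_mul, Complex.exp_pi_mul_I]

lemma abs_zeta (n : ℕ) (hn : 1 ≤ n) (ζ : ℂ)
    (hζ : ζ = Complex.exp (2 * Real.pi * Complex.I / n)) : ‖ζ‖ = 1 := by
  rw [hζ, Complex.norm_exp]
  have : (2 * (Real.pi : ℂ) * Complex.I / n).re = 0 := by
    simp [Complex.div_re]
  rw [this, Real.exp_zero]

lemma key_eval (n : ℕ) (hn : 1 ≤ n) (ζ : ℂ)
    (hζ : ζ = Complex.exp (2 * Real.pi * Complex.I / n))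
    (t : ℂ) (ht : ‖t‖ = 1) (x : ℝ) (α : ℂ) (hα : α ≠ 0)
    (hinv : α⁻¹ = 2 * x - α) :
    ((∏ k ∈ Finset.range n, (x - Complex.re (t * ζ ^ k)) : ℝ) : ℂ) =
      ((α ^ n + (α⁻¹) ^ n) - (t ^ n + (t⁻¹) ^ n)) / 2 ^ n := by
  have ht0 : t ≠ 0 := by intro h; rw [h] at ht; simp at ht
  have hζ1 : ‖ζ‖ = 1 := abs_zeta n hn ζ hζ
  have hζ0 : ζ ≠ 0 := by intro h; rw [h] at hζ1; simp at hζ1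
  have hq : α * (2 * x - α) = 1 := by rw [← hinv]; exact mul_inv_cancel₀ hα
  -- per-factor identity
  have hfac : ∀ k ∈ Finset.range n, ((x : ℂ) - (Complex.re (t * ζ ^ k) : ℂ)) =
      (α - t * ζ ^ k) * (α⁻¹ - t * ζ ^ k) * (-(2 * (t * ζ ^ k))⁻¹) := by
    intro k _
    set u : ℂ := t * ζ ^ k with hu
    have hu1 : ‖u‖ = 1 := by
      rw [hu, norm_mul, norm_pow, ht, hζ1]; simp
    have hu0 : u ≠ 0 := by intro h; rw [h] at hu1; simp at hu1
    have hconj : (starRingEnd ℂ) u = u⁻¹ := by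
      have : u * (starRingEnd ℂ) u = 1 := by
        rw [Complex.mul_conj, Complex.normSq_eq_norm_sq, hu1]; norm_num
      exact (inv_eq_of_mul_eq_one_right this).symm
    have hre : (Complex.re u : ℂ) = (u + u⁻¹) / 2 := by
      rw [← hconj, Complex.add_conj]; push_cast; ring
    rw [hre, hinv]
    field_simp
    ring_nf
    linear_combination hq
  rw [Complex.ofReal_prod]
  push_cast
  rw [Finset.prod_congr rfl hfac]
  rw [Finset.prod_mul_distrib, Finset.prod_mul_distrib]
  rw [prod_lin n hn ζ hζ t α, prod_lin n hn ζ hζ t α⁻¹]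
  have hinvfac : ∏ k ∈ Finset.range n, (-(2 * (t * ζ ^ k))⁻¹) =
      (-(2⁻¹ * t⁻¹)) ^ n * (-1 : ℂ) ^ (n - 1) := by
    have e1 : ∀ k ∈ Finset.range n, -(2 * (t * ζ ^ k))⁻¹ = (-(2⁻¹ * t⁻¹)) * (ζ⁻¹) ^ k := by
      intro k _
      rw [mul_inv, mul_inv, ← inv_pow]
      ring
    rw [Finset.prod_congr rfl e1, Finset.prod_mul_distrib, Finset.prod_const, Finset.card_range]
    congr 1
    have : ∏ k ∈ Finset.range n, (ζ⁻¹) ^ k = (∏ k ∈ Finset.range n, ζ ^ k)⁻¹ := by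
      rw [← Finset.prod_inv_distrib]
      exact Finset.prod_congr rfl fun k _ => by rw [inv_pow]
    rw [this, zeta_prod n hn ζ hζ]
    rcases Nat.even_or_odd (n - 1) with h | h
    · rw [h.neg_one_pow]; norm_num
    · rw [h.neg_one_pow]; norm_num
  rw [hinvfac]
  -- final algebra
  obtain ⟨m, rfl⟩ : ∃ m, n = m + 1 := ⟨n - 1, by omega⟩
  simp only [Nat.add_sub_cancel]
  have hE : ((-1 : ℂ)) ^ m * (-1 : ℂ) ^ m = 1 := by
    rw [← pow_add, ← two_mul, pow_mul]; norm_num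
  have hAA : α ^ (m + 1) * (α⁻¹) ^ (m + 1) = 1 := by
    rw [← mul_pow, mul_inv_cancel₀ hα, one_pow]
  have hTT : t ^ (m + 1) * (t⁻¹) ^ (m + 1) = 1 := by
    rw [← mul_pow, mul_inv_cancel₀ ht0, one_pow]
  have h2n : ((2 : ℂ)) ^ (m + 1) * (2⁻¹ : ℂ) ^ (m + 1) = 1 := by
    rw [← mul_pow]; norm_num
  set A := α ^ (m + 1)
  set A' := (α⁻¹) ^ (m + 1)
  set T := t ^ (m + 1)
  set T' := (t⁻¹) ^ (m + 1)
  rw [show (-(2⁻¹ * t⁻¹)) ^ (m + 1) = (-1 : ℂ) ^ (m + 1) * (2⁻¹ : ℂ) ^ (m + 1) * T' by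
    rw [← mul_pow, ← mul_pow]; congr 1; ring]
  have h2ne : ((2 : ℂ)) ^ (m + 1) ≠ 0 := pow_ne_zero _ two_ne_zero
  rw [eq_div_iff h2ne]
  set c := (2⁻¹ : ℂ) ^ (m + 1) with hc
  set D := (2 : ℂ) ^ (m + 1) with hD
  set E := ((-1 : ℂ)) ^ m with hEe
  linear_combination (-(A - T) * (A' - T) * c * T' * D) * hE +
    (-(A - T) * (A' - T) * T') * h2n + (-T') * hAA + (A + A' - T) * hTT

/-- The polynomials `f_t` and `f_s` differ only by a real constant, namely the
difference of their constant terms. -/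
theorem f_sub_f_eq_const (n : ℕ) (hn : 1 ≤ n)
    (ζ : ℂ) (hζ : ζ = Complex.exp (2 * Real.pi * Complex.I / n))
    (t s : ℂ) (ht : ‖t‖ = 1) (hs : ‖s‖ = 1) :
    (∏ k ∈ Finset.range n, (X - C (Complex.re (t * ζ ^ k)))) -
        (∏ k ∈ Finset.range n, (X - C (Complex.re (s * ζ ^ k)))) =
      C ((∏ k ∈ Finset.range n, (X - C (Complex.re (t * ζ ^ k)))).coeff 0 -
          (∏ k ∈ Finset.range n, (X - C (Complex.re (s * ζ ^ k)))).coeff 0) := by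
  set Ft := ∏ k ∈ Finset.range n, (X - C (Complex.re (t * ζ ^ k))) with hFt
  set Fs := ∏ k ∈ Finset.range n, (X - C (Complex.re (s * ζ ^ k))) with hFs
  have hx : ∀ x : ℝ, ((Polynomial.eval x Ft - Polynomial.eval x Fs : ℝ) : ℂ)
      = ((s ^ n + (s⁻¹) ^ n) - (t ^ n + (t⁻¹) ^ n)) / 2 ^ n := by
    intro x
    obtain ⟨e, he⟩ := IsAlgClosed.exists_pow_nat_eq ((x : ℂ) ^ 2 - 1) (n := 2) (by norm_num)
    set α := (x : ℂ) + e with hαdef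
    have hq : α * (2 * x - α) = 1 := by rw [hαdef]; linear_combination -he
    have hα : α ≠ 0 := left_ne_zero_of_mul_eq_one hq
    have hinv : α⁻¹ = 2 * x - α := inv_eq_of_mul_eq_one_right hq
    have h1 := key_eval n hn ζ hζ t ht x α hα hinv
    have h2 := key_eval n hn ζ hζ s hs x α hα hinv
    have hevalt : Polynomial.eval x Ft = ∏ k ∈ Finset.range n, (x - Complex.re (t * ζ ^ k)) := by
      simp [hFt, eval_prod]
    have hevals : Polynomial.eval x Fs = ∏ k ∈ Finset.range n, (x - Complex.re (s * ζ ^ k)) := by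
      simp [hFs, eval_prod]
    rw [Complex.ofReal_sub, hevalt, hevals, h1, h2]
    ring
  have hconst : ∀ x : ℝ, Polynomial.eval x (Ft - Fs) = Polynomial.eval 0 (Ft - Fs) := by
    intro x
    have h := Complex.ofReal_injective ((hx x).trans (hx 0).symm)
    simpa [eval_sub] using h
  have hfun := Polynomial.funext (p := Ft - Fs) (q := C (Polynomial.eval 0 (Ft - Fs)))
    (fun r => by rw [hconst r, eval_C])
  rw [hfun]
  congr 1
  simp [coeff_zero_eq_eval_zero]
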